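/- (SVD of Bochner matrices) Let A ∈ H^{m×n} be a nonzero Bochner matrix with column rank r. Then there exist σ₁ ≥ ⋯ ≥ σ_r > 0, a Bochner matrix U ∈ H^{m×r} with orthonormal columns, and V ∈ 𝔽^{n×r} with orthonormal columns such that A = U·Σ·V*, where Σ = diag(σ₁,…,σ_r). Moreover the σ_i are uniquely determined (they are the square roots of the nonzero eigenvalues of the positive semidefinite matrix A*A ∈ 𝔽^{n×n}). -/

import Mathlib

open scoped BigOperators

noncomputable def bmul {𝕜 H : Type*} [RCLike 𝕜] [NormedAddCommGroup H]
    [InnerProductSpace 𝕜 H] {m : ℕ} {ι : Type*} [Fintype ι]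
    (A : Fin m → ι → H) : (ι → 𝕜) →ₗ[𝕜] (Fin m → H) where
  toFun x := fun i => ∑ j, x j • A i j
  map_add' x y := by
    funext i
    simp [add_smul, Finset.sum_add_distrib]
  map_smul' c x := by
    funext i
    simp [smul_smul, Finset.smul_sum]

/-- The column rank of a Bochner matrix: the dimension of the image of `x ↦ A·x`. -/
noncomputable def crank (𝕜 : Type*) {H : Type*} [RCLike 𝕜] [NormedAddCommGroup H]
    [InnerProductSpace 𝕜 H] {m : ℕ} {ι : Type*} [Fintype ι]
    (A : Fin m → ι → H) : ℕ :=
  Module.finrank 𝕜 (LinearMap.range (bmul (𝕜 := 𝕜) A))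

set_option linter.unusedSectionVars false

namespace BochnerSVD

variable {𝕜 H : Type*} [RCLike 𝕜] [NormedAddCommGroup H] [InnerProductSpace 𝕜 H]
variable {m n : ℕ}

local notation "⟪" x ", " y "⟫" => @inner 𝕜 _ _ x y

theorem piLp_ext {κ : Type*} [Fintype κ] {x y : EuclideanSpace 𝕜 κ}
    (h : ∀ j, x j = y j) : x = y := WithLp.ofLp_injective 2 (funext h)

theorem piLp_sum_apply {ι κ : Type*} [Fintype κ] (s : Finset ι)
    (f : ι → EuclideanSpace 𝕜 κ) (j : κ) :
    (∑ i ∈ s, f i) j = ∑ i ∈ s, f i j := by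
  classical
  induction s using Finset.cons_induction with
  | empty => rfl
  | cons a s ha ih => rw [Finset.sum_cons, Finset.sum_cons, PiLp.add_apply, ih]

/-- `bmul` with Euclidean domain. -/
noncomputable def bmulE (A : Fin m → Fin n → H) :
    EuclideanSpace 𝕜 (Fin n) →ₗ[𝕜] (Fin m → H) where
  toFun x := fun i => ∑ j, x j • A i j
  map_add' x y := by
    funext i
    show ∑ j, (x j + y j) • A i j = _
    simp [add_smul, Finset.sum_add_distrib]
  map_smul' c x := by
    funext i
    show ∑ j, (c * x j) • A i j = _
    simp [smul_smul, Finset.smul_sum]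

theorem bmulE_apply (A : Fin m → Fin n → H) (x : EuclideanSpace 𝕜 (Fin n)) (i : Fin m) :
    bmulE (𝕜 := 𝕜) A x i = ∑ j, x j • A i j := rfl

/-- The Gram operator `A* A` on Euclidean space. -/
noncomputable def gramOp (A : Fin m → Fin n → H) :
    EuclideanSpace 𝕜 (Fin n) →ₗ[𝕜] EuclideanSpace 𝕜 (Fin n) where
  toFun x := WithLp.toLp 2 (fun j => ∑ i, ⟪A i j, bmulE (𝕜 := 𝕜) A x i⟫)
  map_add' x y := by
    apply piLp_ext; intro j
    show ∑ i, ⟪A i j, bmulE (𝕜 := 𝕜) A (x + y) i⟫ =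
      (∑ i, ⟪A i j, bmulE (𝕜 := 𝕜) A x i⟫) + ∑ i, ⟪A i j, bmulE (𝕜 := 𝕜) A y i⟫
    rw [map_add]
    simp [inner_add_right, Finset.sum_add_distrib]
  map_smul' c x := by
    apply piLp_ext; intro j
    show ∑ i, ⟪A i j, bmulE (𝕜 := 𝕜) A (c • x) i⟫ = c * ∑ i, ⟪A i j, bmulE (𝕜 := 𝕜) A x i⟫
    rw [map_smul]
    simp [inner_smul_right, Finset.mul_sum]

theorem gramOp_apply (A : Fin m → Fin n → H) (x : EuclideanSpace 𝕜 (Fin n)) (j : Fin n) :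
    gramOp (𝕜 := 𝕜) A x j = ∑ i, ⟪A i j, bmulE (𝕜 := 𝕜) A x i⟫ := rfl

theorem inner_gramOp (A : Fin m → Fin n → H) (x y : EuclideanSpace 𝕜 (Fin n)) :
    ⟪x, gramOp (𝕜 := 𝕜) A y⟫ = ∑ i, ⟪bmulE (𝕜 := 𝕜) A x i, bmulE (𝕜 := 𝕜) A y i⟫ := by
  rw [PiLp.inner_apply]
  simp only [gramOp_apply, RCLike.inner_apply, bmulE_apply, sum_inner, inner_smul_left,
    Finset.mul_sum]
  rw [Finset.sum_comm]
  exact Finset.sum_congr rfl fun _ _ => by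
    rw [Finset.sum_mul]; exact Finset.sum_congr rfl fun _ _ => mul_comm _ _

theorem gramOp_isSymmetric (A : Fin m → Fin n → H) :
    (gramOp (𝕜 := 𝕜) A).IsSymmetric := by
  intro x y
  rw [← inner_conj_symm, inner_gramOp, inner_gramOp, map_sum]
  simp [inner_conj_symm]
theorem finrank_span_image {E' : Type*} [NormedAddCommGroup E'] [InnerProductSpace 𝕜 E']
    {ι : Type*} [Fintype ι] {v : ι → E'} (hv : Orthonormal 𝕜 v) (Z : Finset ι) :
    Module.finrank 𝕜 (Submodule.span 𝕜 (v '' ↑Z)) = Z.card := by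
  classical
  have hli : LinearIndependent 𝕜 (fun i : {x // x ∈ Z} => v i) :=
    (hv.comp Subtype.val Subtype.val_injective).linearIndependent
  have hrange : Set.range (fun i : {x // x ∈ Z} => v i) = v '' ↑Z := by
    ext u
    simp [Set.mem_image]
  rw [← hrange, finrank_span_eq_card hli, Fintype.card_coe]

/-- antitone functions with equal level-set counts agree -/
theorem antitone_eq_of_count {r : ℕ} {σ σ' : Fin r → ℝ}
    (hm : ∀ s t : Fin r, s ≤ t → σ t ≤ σ s) (hm' : ∀ s t : Fin r, s ≤ t → σ' t ≤ σ' s)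
    (hcount : ∀ a : ℝ,
      (Finset.univ.filter fun s => σ s = a).card = (Finset.univ.filter fun s => σ' s = a).card) :
    σ = σ' := by
  classical
  have hcnt : ∀ (τ : Fin r → ℝ) (a : ℝ),
      (List.ofFn τ).count a = (Finset.univ.filter fun s => τ s = a).card := by
    intro τ a
    rw [← Multiset.coe_count, ← Fin.univ_val_map, Multiset.count_map]
    rw [Finset.card, Finset.filter_val]
    congr 1
    exact Multiset.filter_congr (fun x _ => eq_comm)
  have hperm : List.Perm (List.ofFn σ) (List.ofFn σ') := by
    rw [List.perm_iff_count]
    intro a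
    rw [hcnt, hcnt, hcount]
  have hs : (List.ofFn σ).SortedGE := by
    rw [List.sortedGE_ofFn_iff]
    exact fun s t h => hm s t h
  have hs' : (List.ofFn σ').SortedGE := by
    rw [List.sortedGE_ofFn_iff]
    exact fun s t h => hm' s t h
  haveI : IsAntisymm ℝ (fun x y : ℝ => y ≤ x) := ⟨fun _ _ h h' => le_antisymm h' h⟩
  exact List.ofFn_injective (List.Perm.eq_of_sortedGE hs hs' hperm)


theorem count_eq (A : Fin m → Fin n → H) {r : ℕ} (σ : Fin r → ℝ) (hpos : ∀ s, 0 < σ s)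
    (U : Fin m → Fin r → H) (V : Matrix (Fin n) (Fin r) 𝕜)
    (hU : ∀ s t : Fin r, (∑ i, ⟪U i t, U i s⟫) = if s = t then 1 else 0)
    (hV : V.conjTranspose * V = 1)
    (hAd : ∀ i j, A i j = ∑ s, ((σ s : 𝕜) * (starRingEnd 𝕜) (V j s)) • U i s)
    (a : ℝ) (ha : 0 < a) :
    (Finset.univ.filter fun s => σ s = a).card
      = Module.finrank 𝕜 (Module.End.eigenspace (gramOp (𝕜 := 𝕜) A) ((a : 𝕜) ^ 2)) := by
  classical
  set vcol : Fin r → EuclideanSpace 𝕜 (Fin n) := fun s => WithLp.toLp 2 (fun j => V j s) with hvcol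
  have hvinner : ∀ s t : Fin r, ⟪vcol s, vcol t⟫ = if s = t then 1 else 0 := by
    intro s t
    have h1 : (V.conjTranspose * V) s t = (1 : Matrix (Fin r) (Fin r) 𝕜) s t := by rw [hV]
    rw [Matrix.mul_apply, Matrix.one_apply] at h1
    simp only [Matrix.conjTranspose_apply] at h1
    rw [PiLp.inner_apply]
    simpa [RCLike.inner_apply, vcol, mul_comm] using h1
  have hvorth : Orthonormal 𝕜 vcol := orthonormal_iff_ite.2 hvinner
  -- Gram entries
  have hGram : ∀ j k : Fin n, (∑ i, ⟪A i j, A i k⟫)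
      = ∑ s, ((σ s : 𝕜)) ^ 2 * (V j s * (starRingEnd 𝕜) (V k s)) := by
    intro j k
    have expand : ∀ i, ⟪A i j, A i k⟫ = ∑ t, ∑ s,
        (V j t * (σ t : 𝕜)) * ((σ s : 𝕜) * (starRingEnd 𝕜) (V k s)) * ⟪U i t, U i s⟫ := by
      intro i
      rw [hAd i j, hAd i k, sum_inner]
      refine Finset.sum_congr rfl fun t _ => ?_
      rw [inner_smul_left, inner_sum, Finset.mul_sum]
      refine Finset.sum_congr rfl fun s _ => ?_
      rw [inner_smul_right]
      simp only [map_mul, RCLike.conj_ofReal, RCLike.conj_conj]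
      ring
    calc ∑ i, ⟪A i j, A i k⟫
        = ∑ i, ∑ t, ∑ s,
            (V j t * (σ t : 𝕜)) * ((σ s : 𝕜) * (starRingEnd 𝕜) (V k s)) * ⟪U i t, U i s⟫ :=
          Finset.sum_congr rfl fun i _ => expand i
      _ = ∑ t, ∑ s, (V j t * (σ t : 𝕜)) * ((σ s : 𝕜) * (starRingEnd 𝕜) (V k s))
            * (∑ i, ⟪U i t, U i s⟫) := by
          rw [Finset.sum_comm]
          refine Finset.sum_congr rfl fun t _ => ?_
          rw [Finset.sum_comm]
          exact Finset.sum_congr rfl fun s _ => (Finset.mul_sum _ _ _).symm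
      _ = ∑ s, ((σ s : 𝕜)) ^ 2 * (V j s * (starRingEnd 𝕜) (V k s)) := by
          simp only [hU, mul_ite, mul_one, mul_zero, Finset.sum_ite_eq', Finset.mem_univ,
            if_true]
          exact Finset.sum_congr rfl fun s _ => by ring
  -- action of the Gram operator
  have hSv : ∀ (x : EuclideanSpace 𝕜 (Fin n)) (j : Fin n),
      gramOp (𝕜 := 𝕜) A x j = ∑ s, ((σ s : 𝕜) ^ 2 * ⟪vcol s, x⟫) * vcol s j := by
    intro x j
    rw [gramOp_apply]
    calc ∑ i, ⟪A i j, bmulE (𝕜 := 𝕜) A x i⟫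
        = ∑ i, ∑ k, x k * ⟪A i j, A i k⟫ := by
          refine Finset.sum_congr rfl fun i _ => ?_
          rw [bmulE_apply, inner_sum]
          exact Finset.sum_congr rfl fun k _ => inner_smul_right _ _ _
      _ = ∑ k, x k * ∑ i, ⟪A i j, A i k⟫ := by
          rw [Finset.sum_comm]
          exact Finset.sum_congr rfl fun k _ => (Finset.mul_sum _ _ _).symm
      _ = ∑ k, x k * ∑ s, ((σ s : 𝕜)) ^ 2 * (V j s * (starRingEnd 𝕜) (V k s)) :=
          Finset.sum_congr rfl fun k _ => by rw [hGram]
      _ = ∑ s, ((σ s : 𝕜) ^ 2 * ⟪vcol s, x⟫) * vcol s j := by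
          simp only [Finset.mul_sum]
          rw [Finset.sum_comm]
          refine Finset.sum_congr rfl fun s _ => ?_
          rw [PiLp.inner_apply]
          simp only [RCLike.inner_apply]
          show ∑ k, x k * ((σ s : 𝕜) ^ 2 * (V j s * (starRingEnd 𝕜) (V k s)))
            = ((σ s : 𝕜) ^ 2 * ∑ k, x k * (starRingEnd 𝕜) (V k s)) * V j s
          rw [Finset.mul_sum, Finset.sum_mul]
          exact Finset.sum_congr rfl fun k _ => by ring
  have hvec : ∀ s, gramOp (𝕜 := 𝕜) A (vcol s) = ((σ s : 𝕜) ^ 2) • vcol s := by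
    intro s
    apply piLp_ext
    intro j
    rw [hSv, PiLp.smul_apply, smul_eq_mul]
    simp [hvinner, mul_ite]
  -- the eigenspace is the span of the relevant columns
  have hset : Module.End.eigenspace (gramOp (𝕜 := 𝕜) A) ((a : 𝕜) ^ 2)
      = Submodule.span 𝕜 (vcol '' ↑(Finset.univ.filter fun s => σ s = a)) := by
    apply le_antisymm
    · intro x hx
      rw [Module.End.mem_eigenspace_iff] at hx
      have hc : ∀ u, σ u ≠ a → ⟪vcol u, x⟫ = 0 := by
        intro u hu
        have h1 : ⟪vcol u, gramOp (𝕜 := 𝕜) A x⟫ = ((σ u : 𝕜)) ^ 2 * ⟪vcol u, x⟫ := by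
          rw [← gramOp_isSymmetric (𝕜 := 𝕜) A (vcol u) x, hvec u, inner_smul_left]
          simp [RCLike.conj_ofReal]
        have h2 : ⟪vcol u, gramOp (𝕜 := 𝕜) A x⟫ = ((a : 𝕜)) ^ 2 * ⟪vcol u, x⟫ := by
          rw [hx, inner_smul_right]
        have h3 : (((σ u : 𝕜)) ^ 2 - ((a : 𝕜)) ^ 2) * ⟪vcol u, x⟫ = 0 := by
          rw [sub_mul, ← h1, ← h2, sub_self]
        rcases mul_eq_zero.1 h3 with h | h
        · exfalso
          apply hu
          have hsq : (σ u) ^ 2 = a ^ 2 := by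
            have := sub_eq_zero.1 h
            exact_mod_cast this
          have h4 : (σ u - a) * (σ u + a) = 0 := by linear_combination hsq
          rcases mul_eq_zero.1 h4 with h' | h'
          · linarith
          · nlinarith [hpos u, ha]
        · exact h
      have hxe : x = ∑ u ∈ Finset.univ.filter (fun s => σ s = a), ⟪vcol u, x⟫ • vcol u := by
        apply piLp_ext
        intro j
        rw [piLp_sum_apply]
        have ha2 : ((a : 𝕜)) ^ 2 ≠ 0 := by
          apply pow_ne_zero
          exact_mod_cast ne_of_gt (show (0:ℝ) < a from ha)
        apply mul_left_cancel₀ ha2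
        have hxj : ((a : 𝕜)) ^ 2 * x j = ∑ s, ((σ s : 𝕜) ^ 2 * ⟪vcol s, x⟫) * vcol s j := by
          rw [← hSv, hx, PiLp.smul_apply, smul_eq_mul]
        rw [hxj, Finset.mul_sum, Finset.sum_filter]
        refine Finset.sum_congr rfl fun s _ => ?_
        by_cases hs : σ s = a
        · rw [if_pos hs, hs, PiLp.smul_apply, smul_eq_mul]
          ring
        · rw [if_neg hs, hc s hs]
          ring
      rw [hxe]
      exact Submodule.sum_mem _ fun u hu =>
        Submodule.smul_mem _ _ (Submodule.subset_span ⟨u, by simpa using hu, rfl⟩)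
    · rw [Submodule.span_le]
      rintro _ ⟨u, hu, rfl⟩
      have hu' : σ u = a := by simpa using hu
      rw [SetLike.mem_coe, Module.End.mem_eigenspace_iff, hvec u, hu']
  rw [hset, finrank_span_image hvorth]

set_option maxHeartbeats 2000000 in
theorem exists_svd (A : Fin m → Fin n → H) {r : ℕ} (hr : crank 𝕜 A = r) :
    ∃ σ : Fin r → ℝ, (∀ s t : Fin r, s ≤ t → σ t ≤ σ s) ∧ (∀ s, 0 < σ s) ∧
      ∃ U : Fin m → Fin r → H, ∃ V : Matrix (Fin n) (Fin r) 𝕜,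
        (∀ s t : Fin r, (∑ i, ⟪U i t, U i s⟫) = if s = t then 1 else 0) ∧
        V.conjTranspose * V = 1 ∧
        (∀ i j, A i j = ∑ s, ((σ s : 𝕜) * (starRingEnd 𝕜) (V j s)) • U i s) := by
  classical
  have hS := gramOp_isSymmetric (𝕜 := 𝕜) A
  have hn : Module.finrank 𝕜 (EuclideanSpace 𝕜 (Fin n)) = n := finrank_euclideanSpace_fin
  set b0 := hS.eigenvectorBasis hn with hb0def
  set lam := hS.eigenvalues hn with hlamdef
  have hb0 : ∀ i, gramOp (𝕜 := 𝕜) A (b0 i) = (lam i : 𝕜) • b0 i := fun i =>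
    hS.apply_eigenvectorBasis hn i
  set p : Equiv.Perm (Fin n) := Tuple.sort (fun i => -lam i) with hp
  have hmono : Monotone ((fun i => -lam i) ∘ p) := Tuple.monotone_sort _
  set μ : Fin n → ℝ := fun i => lam (p i) with hμdef
  have hμanti : ∀ i j : Fin n, i ≤ j → μ j ≤ μ i := by
    intro i j hij
    have := hmono hij
    simp only [Function.comp_apply] at this
    simp only [hμdef]
    linarith
  set v : Fin n → EuclideanSpace 𝕜 (Fin n) := fun i => b0 (p i) with hvdef
  have hvon : Orthonormal 𝕜 v := b0.orthonormal.comp p p.injective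
  have hvinner : ∀ i j, ⟪v i, v j⟫ = if i = j then 1 else 0 := orthonormal_iff_ite.1 hvon
  have hvS : ∀ i, gramOp (𝕜 := 𝕜) A (v i) = (μ i : 𝕜) • v i := fun i => hb0 (p i)
  have hμval : ∀ k, μ k = ∑ i, ‖bmulE (𝕜 := 𝕜) A (v k) i‖ ^ 2 := by
    intro k
    have h1 : ⟪v k, gramOp (𝕜 := 𝕜) A (v k)⟫ = (μ k : 𝕜) := by
      rw [hvS, inner_smul_right, inner_self_eq_norm_sq_to_K, hvon.1 k]
      simp
    have h2 : ⟪v k, gramOp (𝕜 := 𝕜) A (v k)⟫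
        = ((∑ i, ‖bmulE (𝕜 := 𝕜) A (v k) i‖ ^ 2 : ℝ) : 𝕜) := by
      rw [inner_gramOp]
      push_cast
      exact Finset.sum_congr rfl fun i _ => inner_self_eq_norm_sq_to_K _
    exact_mod_cast h1.symm.trans h2
  have hμ0 : ∀ k, 0 ≤ μ k := fun k => (hμval k) ▸ Finset.sum_nonneg fun i _ => sq_nonneg _
  have hTz : ∀ k, μ k = 0 → ∀ i, bmulE (𝕜 := 𝕜) A (v k) i = 0 := by
    intro k hk i
    have h0 : ∑ i, ‖bmulE (𝕜 := 𝕜) A (v k) i‖ ^ 2 = 0 := by rw [← hμval k, hk]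
    have h1 := (Finset.sum_eq_zero_iff_of_nonneg fun i _ => sq_nonneg _).1 h0 i (Finset.mem_univ i)
    have h2 : ‖bmulE (𝕜 := 𝕜) A (v k) i‖ = 0 := by
      nlinarith [norm_nonneg (bmulE (𝕜 := 𝕜) A (v k) i)]
    exact norm_eq_zero.1 h2
  have hexp : ∀ x : EuclideanSpace 𝕜 (Fin n), x = ∑ i, ⟪v i, x⟫ • v i := by
    intro x
    have h1 : ∑ i, ⟪b0 i, x⟫ • b0 i = x := b0.sum_repr' x
    have h2 : ∑ i, ⟪v i, x⟫ • v i = ∑ i, ⟪b0 i, x⟫ • b0 i :=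
      Equiv.sum_comp p (fun i => ⟪b0 i, x⟫ • b0 i)
    rw [h2, h1]
  have hcoeff : ∀ (x : EuclideanSpace 𝕜 (Fin n)) u,
      ⟪v u, gramOp (𝕜 := 𝕜) A x⟫ = (μ u : 𝕜) * ⟪v u, x⟫ := by
    intro x u
    rw [← hS (v u) x, hvS u, inner_smul_left, RCLike.conj_ofReal]
  have hker : LinearMap.ker (gramOp (𝕜 := 𝕜) A)
      = Submodule.span 𝕜 (v '' ↑(Finset.univ.filter fun i => μ i = 0)) := by
    apply le_antisymm
    · intro x hx
      rw [LinearMap.mem_ker] at hx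
      have hc : ∀ u, μ u ≠ 0 → ⟪v u, x⟫ = 0 := by
        intro u hu
        have h1 := hcoeff x u
        rw [hx, inner_zero_right] at h1
        rcases mul_eq_zero.1 h1.symm with h | h
        · exact absurd (by exact_mod_cast h) hu
        · exact h
      have hxe := hexp x
      rw [hxe]
      apply Submodule.sum_mem
      intro i _
      by_cases hi : μ i = 0
      · exact Submodule.smul_mem _ _ (Submodule.subset_span ⟨i, by simpa using hi, rfl⟩)
      · rw [hc i hi, zero_smul]; exact Submodule.zero_mem _
    · rw [Submodule.span_le]
      rintro _ ⟨u, hu, rfl⟩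
      have hu' : μ u = 0 := by simpa using hu
      rw [SetLike.mem_coe, LinearMap.mem_ker, hvS u, hu']
      simp
  have hkerT : LinearMap.ker (gramOp (𝕜 := 𝕜) A) = LinearMap.ker (bmulE (𝕜 := 𝕜) A) := by
    ext x
    rw [LinearMap.mem_ker, LinearMap.mem_ker]
    constructor
    · intro hx
      have h1 : ⟪x, gramOp (𝕜 := 𝕜) A x⟫ = 0 := by rw [hx, inner_zero_right]
      rw [inner_gramOp] at h1
      have h2 : ((∑ i, ‖bmulE (𝕜 := 𝕜) A x i‖ ^ 2 : ℝ) : 𝕜) = 0 := by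
        rw [← h1]
        push_cast
        exact Finset.sum_congr rfl fun i _ => (inner_self_eq_norm_sq_to_K _).symm
      have h3 : ∑ i, ‖bmulE (𝕜 := 𝕜) A x i‖ ^ 2 = 0 := by exact_mod_cast h2
      funext i
      have h4 := (Finset.sum_eq_zero_iff_of_nonneg fun i _ => sq_nonneg _).1 h3 i
        (Finset.mem_univ i)
      have h5 : ‖bmulE (𝕜 := 𝕜) A x i‖ = 0 := by
        nlinarith [norm_nonneg (bmulE (𝕜 := 𝕜) A x i)]
      exact norm_eq_zero.1 h5
    · intro hx
      apply piLp_ext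
      intro j
      show (∑ i, ⟪A i j, bmulE (𝕜 := 𝕜) A x i⟫) = 0
      rw [hx]
      simp
  have hrange : LinearMap.range (bmul (𝕜 := 𝕜) A) = LinearMap.range (bmulE (𝕜 := 𝕜) A) := by
    ext u
    simp only [LinearMap.mem_range]
    constructor
    · rintro ⟨x, hx⟩; exact ⟨WithLp.toLp 2 x, hx⟩
    · rintro ⟨x, hx⟩; exact ⟨WithLp.ofLp x, hx⟩
  have hrankT : Module.finrank 𝕜 ↥(LinearMap.range (bmulE (𝕜 := 𝕜) A)) = r := by
    rw [← hrange]; exact hr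
  have hrank_nullity : Module.finrank 𝕜 ↥(LinearMap.range (bmulE (𝕜 := 𝕜) A))
      + Module.finrank 𝕜 ↥(LinearMap.ker (bmulE (𝕜 := 𝕜) A)) = n := by
    rw [LinearMap.finrank_range_add_finrank_ker, hn]
  have hkerdim : Module.finrank 𝕜 ↥(LinearMap.ker (bmulE (𝕜 := 𝕜) A))
      = (Finset.univ.filter fun i => μ i = 0).card := by
    rw [← hkerT, hker, finrank_span_image hvon]
  have hfilters : (Finset.univ.filter fun i => 0 < μ i).card
      + (Finset.univ.filter fun i => μ i = 0).card = n := by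
    have h1 : (Finset.univ.filter fun i : Fin n => μ i = 0).card
        + (Finset.univ.filter fun i : Fin n => ¬ μ i = 0).card = n := by
      rw [Finset.card_filter_add_card_filter_not]
      simp
    have h2 : (Finset.univ.filter fun i : Fin n => ¬ μ i = 0)
        = (Finset.univ.filter fun i : Fin n => 0 < μ i) := by
      apply Finset.filter_congr
      intro i _
      constructor
      · intro hi; exact lt_of_le_of_ne (hμ0 i) (Ne.symm hi)
      · intro hi; exact ne_of_gt hi
    rw [h2] at h1
    omega
  have hPcard : (Finset.univ.filter fun i => 0 < μ i).card = r := by omega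
  have hrn : r ≤ n := by
    have h1 := Finset.card_filter_le Finset.univ (fun i : Fin n => 0 < μ i)
    rw [hPcard] at h1
    simpa using h1
  have hlt : ∀ i : Fin n, (i : ℕ) < r ↔ 0 < μ i := by
    intro i
    constructor
    · intro h
      by_contra hneg
      have hzero : μ i = 0 := le_antisymm (not_lt.1 hneg) (hμ0 i)
      have hsub : (Finset.univ.filter fun k => 0 < μ k) ⊆ Finset.Iio i := by
        intro j hj
        rw [Finset.mem_Iio]
        by_contra hji
        have hle : μ j ≤ μ i := hμanti i j (not_lt.1 hji)
        rw [Finset.mem_filter] at hj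
        linarith [hj.2]
      have hcard := Finset.card_le_card hsub
      rw [hPcard, Fin.card_Iio] at hcard
      omega
    · intro h
      have hsub : Finset.Iic i ⊆ (Finset.univ.filter fun k => 0 < μ k) := by
        intro j hj
        rw [Finset.mem_Iic] at hj
        rw [Finset.mem_filter]
        exact ⟨Finset.mem_univ j, lt_of_lt_of_le h (hμanti j i hj)⟩
      have hcard := Finset.card_le_card hsub
      rw [hPcard, Fin.card_Iic] at hcard
      omega
  set cs : Fin r → Fin n := Fin.castLE hrn with hcsdef
  set σ₀ : Fin r → ℝ := fun s => Real.sqrt (μ (cs s)) with hσ₀def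
  have hcslt : ∀ s : Fin r, 0 < μ (cs s) := fun s => (hlt (cs s)).1 s.isLt
  have hσpos : ∀ s, 0 < σ₀ s := fun s => Real.sqrt_pos.2 (hcslt s)
  have hσsq : ∀ s, σ₀ s ^ 2 = μ (cs s) := fun s => Real.sq_sqrt (hcslt s).le
  have hσanti : ∀ s t : Fin r, s ≤ t → σ₀ t ≤ σ₀ s := by
    intro s t hst
    exact Real.sqrt_le_sqrt (hμanti (cs s) (cs t) hst)
  set U : Fin m → Fin r → H :=
    fun i s => (((σ₀ s)⁻¹ : ℝ) : 𝕜) • bmulE (𝕜 := 𝕜) A (v (cs s)) i with hUdef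
  set V : Matrix (Fin n) (Fin r) 𝕜 := fun j s => v (cs s) j with hVdef
  have hTT : ∀ k l : Fin n, (∑ i, ⟪bmulE (𝕜 := 𝕜) A (v k) i, bmulE (𝕜 := 𝕜) A (v l) i⟫)
      = if k = l then (μ l : 𝕜) else 0 := by
    intro k l
    rw [← inner_gramOp, hvS l, inner_smul_right, hvinner]
    split_ifs <;> simp
  have hUorth : ∀ s t : Fin r, (∑ i, ⟪U i t, U i s⟫) = if s = t then 1 else 0 := by
    intro s t
    have hcalc : (∑ i, ⟪U i t, U i s⟫)
        = (((σ₀ t)⁻¹ : ℝ) : 𝕜) * (((σ₀ s)⁻¹ : ℝ) : 𝕜)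
          * (if cs t = cs s then (μ (cs s) : 𝕜) else 0) := by
      rw [← hTT (cs t) (cs s), Finset.mul_sum]
      refine Finset.sum_congr rfl fun i _ => ?_
      simp only [hUdef]
      rw [inner_smul_left, inner_smul_right, RCLike.conj_ofReal]
      ring
    rw [hcalc]
    by_cases hst : s = t
    · subst hst
      rw [if_pos rfl, if_pos rfl]
      have hval : (μ (cs s) : 𝕜) = ((σ₀ s : ℝ) : 𝕜) ^ 2 := by
        rw [← hσsq s]
        push_cast
        ring
      have hne : ((σ₀ s : ℝ) : 𝕜) ≠ 0 := by
        rw [ne_eq, RCLike.ofReal_eq_zero]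
        exact ne_of_gt (hσpos s)
      rw [hval]
      push_cast
      field_simp
    · have hne : ¬ (cs t = cs s) := fun h => hst ((Fin.castLE_injective hrn) h).symm
      rw [if_neg hne, if_neg hst, mul_zero]
  have hVorth : V.conjTranspose * V = 1 := by
    ext s t
    rw [Matrix.mul_apply, Matrix.one_apply]
    have h1 := hvinner (cs s) (cs t)
    rw [PiLp.inner_apply] at h1
    simp only [RCLike.inner_apply] at h1
    have hcs : (cs s = cs t) ↔ (s = t) :=
      ⟨fun h => (Fin.castLE_injective hrn) h, fun h => by rw [h]⟩
    have h2 : ∑ j, V.conjTranspose s j * V j t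
        = ∑ x, v (cs t) x * (starRingEnd 𝕜) (v (cs s) x) := by
      refine Finset.sum_congr rfl fun j _ => ?_
      show (starRingEnd 𝕜) (v (cs s) j) * v (cs t) j = _
      rw [mul_comm]
    rw [h2, h1]
    exact if_congr hcs rfl rfl
  have hTvz : ∀ k : Fin n, ¬ (k : ℕ) < r → ∀ i, bmulE (𝕜 := 𝕜) A (v k) i = 0 := by
    intro k hk i
    apply hTz
    have h1 : ¬ 0 < μ k := fun h => hk ((hlt k).2 h)
    exact le_antisymm (not_lt.1 h1) (hμ0 k)
  have hdecomp : ∀ i j, A i j = ∑ s : Fin r, ((σ₀ s : 𝕜) * (starRingEnd 𝕜) (V j s)) • U i s := by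
    intro i j
    have hsingle : A i j = bmulE (𝕜 := 𝕜) A (EuclideanSpace.single j (1 : 𝕜)) i := by
      rw [bmulE_apply]
      simp [EuclideanSpace.single_apply]
    have hstep : A i j = ∑ k, ⟪v k, EuclideanSpace.single j (1 : 𝕜)⟫
        • bmulE (𝕜 := 𝕜) A (v k) i := by
      rw [hsingle]
      conv_lhs => rw [hexp (EuclideanSpace.single j (1 : 𝕜))]
      rw [map_sum, Finset.sum_apply]
      exact Finset.sum_congr rfl fun k _ => by rw [map_smul]; rfl
    have hsi : ∀ k, ⟪v k, EuclideanSpace.single j (1 : 𝕜)⟫ = (starRingEnd 𝕜) (v k j) := by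
      intro k
      rw [EuclideanSpace.inner_single_right]
      simp
    have hmapset : (Finset.univ.map ⟨cs, Fin.castLE_injective hrn⟩ : Finset (Fin n))
        = Finset.univ.filter (fun k : Fin n => (k : ℕ) < r) := by
      ext k
      simp only [Finset.mem_map, Finset.mem_filter, Finset.mem_univ, true_and,
        Function.Embedding.coeFn_mk]
      constructor
      · rintro ⟨s, rfl⟩
        exact s.isLt
      · intro hk
        exact ⟨⟨(k : ℕ), hk⟩, by ext; rfl⟩
    calc A i j = ∑ k, (starRingEnd 𝕜) (v k j) • bmulE (𝕜 := 𝕜) A (v k) i := by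
          rw [hstep]
          exact Finset.sum_congr rfl fun k _ => by rw [hsi]
      _ = ∑ k ∈ Finset.univ.filter (fun k : Fin n => (k : ℕ) < r),
            (starRingEnd 𝕜) (v k j) • bmulE (𝕜 := 𝕜) A (v k) i := by
          symm
          apply Finset.sum_filter_of_ne
          intro x _ hx
          by_contra h
          exact hx (by rw [hTvz x h i, smul_zero])
      _ = ∑ s : Fin r, (starRingEnd 𝕜) (v (cs s) j) • bmulE (𝕜 := 𝕜) A (v (cs s)) i := by
          rw [← hmapset, Finset.sum_map]
          simp only [Function.Embedding.coeFn_mk]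
      _ = ∑ s : Fin r, ((σ₀ s : 𝕜) * (starRingEnd 𝕜) (V j s)) • U i s := by
          refine Finset.sum_congr rfl fun s _ => ?_
          simp only [hUdef, hVdef]
          rw [smul_smul]
          congr 1
          have hne : ((σ₀ s : ℝ) : 𝕜) ≠ 0 := by
            rw [ne_eq, RCLike.ofReal_eq_zero]
            exact ne_of_gt (hσpos s)
          push_cast
          field_simp
  exact ⟨σ₀, hσanti, hσpos, U, V, hUorth, hVorth, hdecomp⟩

end BochnerSVD

/-- SVD of Bochner matrices: a nonzero `A ∈ H^{m×n}` with column rank `r` has a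
decomposition `A = U Σ V*` with `σ₁ ≥ ⋯ ≥ σ_r > 0`, `U ∈ H^{m×r}` with
orthonormal columns, `V ∈ 𝔽^{n×r}` with orthonormal columns; the singular
values `σ` are uniquely determined. -/
theorem bochner_svd {𝕜 H : Type*} [RCLike 𝕜]
    [NormedAddCommGroup H] [InnerProductSpace 𝕜 H] [CompleteSpace H]
    {m n r : ℕ} (A : Fin m → Fin n → H)
    (hA : A ≠ fun _ _ => 0) (hr : crank 𝕜 A = r) :
    ∃! σ : Fin r → ℝ,
      (∀ s t : Fin r, s ≤ t → σ t ≤ σ s) ∧ (∀ s, 0 < σ s) ∧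
      ∃ U : Fin m → Fin r → H, ∃ V : Matrix (Fin n) (Fin r) 𝕜,
        (∀ s t : Fin r, (∑ i, inner (𝕜 := 𝕜) (U i t) (U i s)) =
          if s = t then 1 else 0) ∧
        V.conjTranspose * V = 1 ∧
        (∀ i j, A i j = ∑ s, ((σ s : 𝕜) * (starRingEnd 𝕜) (V j s)) • U i s) := by
  classical
  obtain ⟨σ₀, hσanti, hσpos, U, V, hUorth, hVorth, hdecomp⟩ :=
    BochnerSVD.exists_svd (𝕜 := 𝕜) A hr
  refine ⟨σ₀, ⟨hσanti, hσpos, U, V, hUorth, hVorth, hdecomp⟩, ?_⟩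
  rintro σ' ⟨h1, h2, U', V', h3, h4, h5⟩
  apply BochnerSVD.antitone_eq_of_count h1 hσanti
  intro a
  rcases le_or_gt a 0 with hle | hgt
  · have e1 : (Finset.univ.filter fun s => σ' s = a) = ∅ := by
      apply Finset.filter_false_of_mem
      intro s _ hs
      exact absurd (hs ▸ h2 s) (not_lt.2 hle)
    have e2 : (Finset.univ.filter fun s => σ₀ s = a) = ∅ := by
      apply Finset.filter_false_of_mem
      intro s _ hs
      exact absurd (hs ▸ hσpos s) (not_lt.2 hle)
    rw [e1, e2]
  · rw [BochnerSVD.count_eq A σ' h2 U' V' h3 h4 h5 a hgt,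
      BochnerSVD.count_eq A σ₀ hσpos U V hUorth hVorth hdecomp a hgt]
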